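/- Product construction for Sperner partition systems: if m, n, k are positive integers with m ≥ k and n ≥ k, and there exist an (m,k)-Sperner partition system with p partitions on a set X and an (n,k)-Sperner partition system with q partitions on a set Y disjoint from X, then there exists an (m+n,k)-Sperner partition system with k·p·q partitions on X ∪ Y. Specifically, indexing the classes of each partition by Z/kZ, the partitions σ_{i,j,y} = { π_{i,z} ∪ ρ_{j,z+y} : z ∈ Z/kZ } for all i, j and y ∈ Z/kZ form such a system. -/
import Mathlib


/-- A partition of the finite set `X` into `k` nonempty classes. -/
def IsPartitionInto {α : Type*} [DecidableEq α] (X : Finset α) (k : ℕ)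
    (π : Finset (Finset α)) : Prop :=
  π.card = k ∧ (∀ A ∈ π, A.Nonempty) ∧
    (∀ A ∈ π, ∀ B ∈ π, A ≠ B → Disjoint A B) ∧ π.biUnion id = X

/-- An `(n,k)`-Sperner partition system on ground set `X`. -/
def IsSpernerSystem {α : Type*} [DecidableEq α] (X : Finset α) (k : ℕ)
    (P : Finset (Finset (Finset α))) : Prop :=
  (∀ π ∈ P, IsPartitionInto X k π) ∧
    ∀ π ∈ P, ∀ π' ∈ P, π ≠ π' → ∀ A ∈ π, ∀ B ∈ π', ¬ A ⊆ B

/-- Product construction: from an `(m,k)`-Sperner partition system with `p` partitions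
and an `(n,k)`-Sperner partition system with `q` partitions on a disjoint ground set,
one obtains an `(m+n,k)`-Sperner partition system with `k·p·q` partitions. -/
theorem stmt_6 {α : Type*} [DecidableEq α] (m n k p q : ℕ)
    (hk : 0 < k) (hm : k ≤ m) (hn : k ≤ n)
    (X Y : Finset α) (hXY : Disjoint X Y) (hX : X.card = m) (hY : Y.card = n)
    (P : Finset (Finset (Finset α))) (hP : IsSpernerSystem X k P) (hPp : P.card = p)
    (Q : Finset (Finset (Finset α))) (hQ : IsSpernerSystem Y k Q) (hQq : Q.card = q) :
    ∃ R : Finset (Finset (Finset α)),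
      IsSpernerSystem (X ∪ Y) k R ∧ R.card = k * p * q := by
  classical
  haveI : NeZero k := ⟨hk.ne'⟩
  obtain ⟨hPpart, hPsp⟩ := hP
  obtain ⟨hQpart, hQsp⟩ := hQ
  -- enumeration of the classes of a k-class partition by ZMod k
  let E : ∀ π : Finset (Finset α), π.card = k → ZMod k → Finset α :=
    fun π h z => ((Fintype.equivOfCardEq
      (show Fintype.card (ZMod k) = Fintype.card ↥π by
        rw [ZMod.card, Fintype.card_coe, h]) z : ↥π) : Finset α)
  have Emem : ∀ (π : Finset (Finset α)) (h : π.card = k) (z : ZMod k), E π h z ∈ π :=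
    fun π h z => Subtype.coe_prop _
  have Einj : ∀ (π : Finset (Finset α)) (h : π.card = k) (z z' : ZMod k),
      E π h z = E π h z' → z = z' := by
    intro π h z z' hzz
    exact (Fintype.equivOfCardEq _).injective (Subtype.ext hzz)
  have Esurj : ∀ (π : Finset (Finset α)) (h : π.card = k), ∀ A ∈ π,
      ∃ z : ZMod k, E π h z = A := by
    intro π h A hA
    refine ⟨(Fintype.equivOfCardEq (show Fintype.card (ZMod k) = Fintype.card ↥π by
      rw [ZMod.card, Fintype.card_coe, h])).symm ⟨A, hA⟩, ?_⟩
    simp [E]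
  -- subsets of ground sets
  have subX : ∀ π ∈ P, ∀ A ∈ π, A ⊆ X := fun π hπ A hA =>
    (hPpart π hπ).2.2.2 ▸ Finset.subset_biUnion_of_mem id hA
  have subY : ∀ ρ ∈ Q, ∀ B ∈ ρ, B ⊆ Y := fun ρ hρ B hB =>
    (hQpart ρ hρ).2.2.2 ▸ Finset.subset_biUnion_of_mem id hB
  -- splitting a containment of unions along the disjoint ground sets
  have split : ∀ A B A' B' : Finset α, A ⊆ X → B ⊆ Y → A' ⊆ X → B' ⊆ Y →
      A ∪ B ⊆ A' ∪ B' → A ⊆ A' ∧ B ⊆ B' := by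
    intro A B A' B' hAX hBY hA'X hB'Y hsub
    constructor
    · intro a ha
      rcases Finset.mem_union.1 (hsub (Finset.mem_union_left _ ha)) with h' | h'
      · exact h'
      · exact absurd (hB'Y h') (Finset.disjoint_left.1 hXY (hAX ha))
    · intro a ha
      rcases Finset.mem_union.1 (hsub (Finset.mem_union_right _ ha)) with h' | h'
      · exact absurd (hA'X h') (Finset.disjoint_right.1 hXY (hBY ha))
      · exact h'
  -- within a partition, a class contained in a class is equal to it
  have subeq : ∀ (Z : Finset α) (π : Finset (Finset α)), IsPartitionInto Z k π →
      ∀ A ∈ π, ∀ B ∈ π, A ⊆ B → A = B := by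
    intro Z π hpart A hA B hB hAB
    by_contra hne
    have hd := hpart.2.2.1 A hA B hB hne
    obtain ⟨a, ha⟩ := hpart.2.1 A hA
    exact Finset.disjoint_left.1 hd ha (hAB ha)
  -- key lemma: a containment between classes of two product partitions forces equality
  have key : ∀ (π : Finset (Finset α)) (hπ : π ∈ P) (ρ : Finset (Finset α)) (hρ : ρ ∈ Q)
      (y : ZMod k) (π' : Finset (Finset α)) (hπ' : π' ∈ P) (ρ' : Finset (Finset α))
      (hρ' : ρ' ∈ Q) (y' : ZMod k) (z z' : ZMod k),
      E π (hPpart π hπ).1 z ∪ E ρ (hQpart ρ hρ).1 (z + y) ⊆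
        E π' (hPpart π' hπ').1 z' ∪ E ρ' (hQpart ρ' hρ').1 (z' + y') →
      π = π' ∧ ρ = ρ' ∧ y = y' ∧ z = z' := by
    intro π hπ ρ hρ y π' hπ' ρ' hρ' y' z z' hsub
    obtain ⟨h1, h2⟩ := split (E π (hPpart π hπ).1 z) (E ρ (hQpart ρ hρ).1 (z + y))
      (E π' (hPpart π' hπ').1 z') (E ρ' (hQpart ρ' hρ').1 (z' + y'))
      (subX π hπ (E π (hPpart π hπ).1 z) (Emem π (hPpart π hπ).1 z))
      (subY ρ hρ (E ρ (hQpart ρ hρ).1 (z + y)) (Emem ρ (hQpart ρ hρ).1 (z + y)))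
      (subX π' hπ' (E π' (hPpart π' hπ').1 z') (Emem π' (hPpart π' hπ').1 z'))
      (subY ρ' hρ' (E ρ' (hQpart ρ' hρ').1 (z' + y')) (Emem ρ' (hQpart ρ' hρ').1 (z' + y'))) hsub
    have hππ' : π = π' := by
      by_contra hne
      exact hPsp π hπ π' hπ' hne (E π (hPpart π hπ).1 z) (Emem π (hPpart π hπ).1 z)
        (E π' (hPpart π' hπ').1 z') (Emem π' (hPpart π' hπ').1 z') h1
    subst hππ'
    have hρρ' : ρ = ρ' := by
      by_contra hne
      exact hQsp ρ hρ ρ' hρ' hne (E ρ (hQpart ρ hρ).1 (z + y)) (Emem ρ (hQpart ρ hρ).1 (z + y))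
        (E ρ' (hQpart ρ' hρ').1 (z' + y')) (Emem ρ' (hQpart ρ' hρ').1 (z' + y')) h2
    subst hρρ'
    have hz : z = z' :=
      Einj π (hPpart π hπ).1 z z' (subeq X π (hPpart π hπ) (E π (hPpart π hπ).1 z)
        (Emem π (hPpart π hπ).1 z) (E π (hPpart π hπ).1 z') (Emem π (hPpart π hπ).1 z') h1)
    have hzy : z + y = z' + y' :=
      Einj ρ (hQpart ρ hρ).1 (z + y) (z' + y') (subeq Y ρ (hQpart ρ hρ)
        (E ρ (hQpart ρ hρ).1 (z + y)) (Emem ρ (hQpart ρ hρ).1 (z + y))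
        (E ρ (hQpart ρ hρ).1 (z' + y')) (Emem ρ (hQpart ρ hρ).1 (z' + y')) h2)
    subst hz
    exact ⟨rfl, rfl, add_left_cancel hzy, rfl⟩
  -- each product family is a partition of X ∪ Y into k classes
  have partAll : ∀ (π : Finset (Finset α)) (hπ : π ∈ P) (ρ : Finset (Finset α)) (hρ : ρ ∈ Q)
      (y : ZMod k), IsPartitionInto (X ∪ Y) k (Finset.image
        (fun z : ZMod k => E π (hPpart π hπ).1 z ∪ E ρ (hQpart ρ hρ).1 (z + y))
        Finset.univ) := by
    intro π hπ ρ hρ y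
    have hginj : Function.Injective
        (fun z : ZMod k => E π (hPpart π hπ).1 z ∪ E ρ (hQpart ρ hρ).1 (z + y)) := by
      intro z z' hzz
      simp only at hzz
      exact (key π hπ ρ hρ y π hπ ρ hρ y z z' (le_of_eq hzz)).2.2.2
    refine ⟨?_, ?_, ?_, ?_⟩
    · rw [Finset.card_image_of_injective _ hginj, Finset.card_univ, ZMod.card]
    · rintro A hA
      obtain ⟨z, _, rfl⟩ := Finset.mem_image.1 hA
      exact ((hPpart π hπ).2.1 (E π (hPpart π hπ).1 z)
        (Emem π (hPpart π hπ).1 z)).mono Finset.subset_union_left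
    · rintro A hA B hB hne
      obtain ⟨z, _, rfl⟩ := Finset.mem_image.1 hA
      obtain ⟨z', _, rfl⟩ := Finset.mem_image.1 hB
      have hzz' : z ≠ z' := fun h => hne (by rw [h])
      refine Finset.disjoint_union_left.2 ⟨?_, ?_⟩
      · refine Finset.disjoint_union_right.2 ⟨?_, ?_⟩
        · refine (hPpart π hπ).2.2.1 (E π (hPpart π hπ).1 z) (Emem π (hPpart π hπ).1 z)
            (E π (hPpart π hπ).1 z') (Emem π (hPpart π hπ).1 z') ?_
          exact fun h => hzz' (Einj π (hPpart π hπ).1 z z' h)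
        · exact hXY.mono (subX π hπ (E π (hPpart π hπ).1 z) (Emem π (hPpart π hπ).1 z))
            (subY ρ hρ (E ρ (hQpart ρ hρ).1 (z' + y)) (Emem ρ (hQpart ρ hρ).1 (z' + y)))
      · refine Finset.disjoint_union_right.2 ⟨?_, ?_⟩
        · exact hXY.symm.mono (subY ρ hρ (E ρ (hQpart ρ hρ).1 (z + y)) (Emem ρ (hQpart ρ hρ).1 (z + y)))
            (subX π hπ (E π (hPpart π hπ).1 z') (Emem π (hPpart π hπ).1 z'))
        · refine (hQpart ρ hρ).2.2.1 (E ρ (hQpart ρ hρ).1 (z + y)) (Emem ρ (hQpart ρ hρ).1 (z + y))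
            (E ρ (hQpart ρ hρ).1 (z' + y)) (Emem ρ (hQpart ρ hρ).1 (z' + y)) ?_
          exact fun h => hzz' (add_right_cancel (Einj ρ (hQpart ρ hρ).1 (z + y) (z' + y) h))
    · ext a
      simp only [Finset.mem_biUnion, Finset.mem_image, Finset.mem_union, id]
      constructor
      · rintro ⟨A, ⟨z, _, rfl⟩, ha⟩
        rcases Finset.mem_union.1 ha with h' | h'
        · exact Or.inl (subX π hπ (E π (hPpart π hπ).1 z) (Emem π (hPpart π hπ).1 z) h')
        · exact Or.inr (subY ρ hρ (E ρ (hQpart ρ hρ).1 (z + y)) (Emem ρ (hQpart ρ hρ).1 (z + y)) h')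
      · rintro (h' | h')
        · have : a ∈ π.biUnion id := (hPpart π hπ).2.2.2 ▸ h'
          obtain ⟨A, hA, haA⟩ := Finset.mem_biUnion.1 this
          obtain ⟨z, rfl⟩ := Esurj π (hPpart π hπ).1 A hA
          exact ⟨_, ⟨z, Finset.mem_univ z, rfl⟩, Finset.mem_union_left _ haA⟩
        · have : a ∈ ρ.biUnion id := (hQpart ρ hρ).2.2.2 ▸ h'
          obtain ⟨B, hB, haB⟩ := Finset.mem_biUnion.1 this
          obtain ⟨w, rfl⟩ := Esurj ρ (hQpart ρ hρ).1 B hB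
          refine ⟨_, ⟨w - y, Finset.mem_univ _, rfl⟩, Finset.mem_union_right _ ?_⟩
          rw [sub_add_cancel]
          exact haB
  -- the product system
  let F : {π // π ∈ P} × {ρ // ρ ∈ Q} × ZMod k → Finset (Finset α) :=
    fun t => Finset.image (fun z : ZMod k =>
      E t.1.1 (hPpart t.1.1 t.1.2).1 z ∪ E t.2.1.1 (hQpart t.2.1.1 t.2.1.2).1 (z + t.2.2))
      Finset.univ
  have hFdef : ∀ t : {π // π ∈ P} × {ρ // ρ ∈ Q} × ZMod k,
      F t = Finset.image (fun z : ZMod k =>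
        E t.1.1 (hPpart t.1.1 t.1.2).1 z ∪ E t.2.1.1 (hQpart t.2.1.1 t.2.1.2).1 (z + t.2.2))
        Finset.univ := fun _ => rfl
  have Finj : Function.Injective F := by
    rintro ⟨⟨π, hπ⟩, ⟨ρ, hρ⟩, y⟩ ⟨⟨π', hπ'⟩, ⟨ρ', hρ'⟩, y'⟩ hFF
    rw [hFdef, hFdef] at hFF
    have h0 : E π (hPpart π hπ).1 0 ∪ E ρ (hQpart ρ hρ).1 (0 + y) ∈
        Finset.image (fun z : ZMod k =>
          E π' (hPpart π' hπ').1 z ∪ E ρ' (hQpart ρ' hρ').1 (z + y')) Finset.univ := by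
      rw [← hFF]
      exact Finset.mem_image_of_mem _ (Finset.mem_univ 0)
    obtain ⟨z', _, hz'⟩ := Finset.mem_image.1 h0
    obtain ⟨e1, e2, e3, _⟩ := key π hπ ρ hρ y π' hπ' ρ' hρ' y' 0 z' (ge_of_eq hz')
    subst e1; subst e2; subst e3
    rfl
  refine ⟨Finset.image F Finset.univ, ⟨?_, ?_⟩, ?_⟩
  · rintro σ hσ
    obtain ⟨⟨⟨π, hπ⟩, ⟨ρ, hρ⟩, y⟩, _, rfl⟩ := Finset.mem_image.1 hσ
    rw [hFdef]
    exact partAll π hπ ρ hρ y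
  · rintro σ hσ σ' hσ' hne A hA B hB hAB
    obtain ⟨⟨⟨π, hπ⟩, ⟨ρ, hρ⟩, y⟩, _, rfl⟩ := Finset.mem_image.1 hσ
    obtain ⟨⟨⟨π', hπ'⟩, ⟨ρ', hρ'⟩, y'⟩, _, rfl⟩ := Finset.mem_image.1 hσ'
    rw [hFdef] at hA
    rw [hFdef] at hB
    obtain ⟨z, _, rfl⟩ := Finset.mem_image.1 hA
    obtain ⟨z', _, rfl⟩ := Finset.mem_image.1 hB
    obtain ⟨e1, e2, e3, _⟩ := key π hπ ρ hρ y π' hπ' ρ' hρ' y' z z' hAB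
    subst e1; subst e2; subst e3
    exact hne rfl
  · rw [Finset.card_image_of_injective _ Finj, Finset.card_univ, Fintype.card_prod,
      Fintype.card_prod, Fintype.card_coe, Fintype.card_coe, ZMod.card, hPp, hQq]
    ring
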